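/- Assume G is p-nilpotent, i.e., G has a normal subgroup of order prime to p whose quotient is a p-group, and let F be a field of characteristic p. Then the map from Hom(G, F^×) to the group of coherent G-stable tuples of linear characters with values in F, sending a homomorphism φ : G → F^× to the tuple whose P-component is the restriction of φ to N_G(P), is a group isomorphism. -/

import Mathlib

/-!  Common definitions: representations of finite groups over a commutative ring,
direct summands, permutation modules, vertices, Brauer-type trivial parts, characters,
p-parts of group elements, coherent tuples.  -/

open scoped TensorProduct

universe u v w

section Defs

variable {k : Type u} [CommSemiring k]

/-- `ρ` is isomorphic to a direct summand of `σ`, equivariantly. -/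
def IsSummand {G : Type*} [Monoid G] {V : Type*} [AddCommMonoid V] [Module k V]
    {W : Type*} [AddCommMonoid W] [Module k W]
    (ρ : Representation k G V) (σ : Representation k G W) : Prop :=
  ∃ (i : V →ₗ[k] W) (π : W →ₗ[k] V),
    (∀ g v, i (ρ g v) = σ g (i v)) ∧ (∀ g w, π (σ g w) = ρ g (π w)) ∧ ∀ v, π (i v) = v

/-- equivariant isomorphism of representations -/
def RepEquiv {G : Type*} [Monoid G] {V : Type*} [AddCommMonoid V] [Module k V]
    {W : Type*} [AddCommMonoid W] [Module k W]
    (ρ : Representation k G V) (σ : Representation k G W) : Prop :=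
  ∃ e : V ≃ₗ[k] W, ∀ g v, e (ρ g v) = σ g (e v)

/-- the direct sum of two representations -/
def prodRep {G : Type*} [Monoid G] {V : Type*} [AddCommMonoid V] [Module k V]
    {W : Type*} [AddCommMonoid W] [Module k W]
    (ρ : Representation k G V) (σ : Representation k G W) :
    Representation k G (V × W) where
  toFun g := (ρ g).prodMap (σ g)
  map_one' := by apply LinearMap.ext; intro v; simp
  map_mul' g h := by apply LinearMap.ext; intro v; simp

/-- the permutation representation attached to an action of `G` on `X` by permutations -/
def permRep {G : Type*} [Group G] (X : Type*) (a : G →* Equiv.Perm X) :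
    Representation k G (X → k) where
  toFun g := LinearMap.funLeft k k (a g⁻¹)
  map_one' := by apply LinearMap.ext; intro f; simp [LinearMap.funLeft]
  map_mul' g h := by
    apply LinearMap.ext; intro f; funext x
    simp [LinearMap.funLeft, mul_inv_rev]

/-- a p-permutation module over `k`: a module isomorphic to a direct summand of a
permutation module `k[X]` for a finite `G`-set `X` -/
def IsPermutationSummand {G : Type*} [Group G] {V : Type*} [AddCommMonoid V] [Module k V]
    (ρ : Representation k G V) : Prop :=
  ∃ (X : Type u) (a : G →* Equiv.Perm X), Finite X ∧ IsSummand ρ (permRep X a)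

/-- an indecomposable representation: nonzero, and every equivariant idempotent
endomorphism is `0` or the identity -/
def IsIndecomposableRep {G : Type*} [Monoid G] {V : Type*} [AddCommMonoid V] [Module k V]
    (ρ : Representation k G V) : Prop :=
  (∃ v : V, v ≠ 0) ∧ ∀ f : V →ₗ[k] V,
    (∀ g v, f (ρ g v) = ρ g (f v)) → (∀ v, f (f v) = f v) →
      (∀ v, f v = 0) ∨ (∀ v, f v = v)

/-- the carrier of the induced module `Ind_H^G (Res_H^G ρ)`:
functions `f : G → V` with `f (h * g) = ρ h (f g)` for `h ∈ H` -/
def indResCarrier {G : Type*} [Group G] {V : Type*} [AddCommMonoid V] [Module k V]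
    (ρ : Representation k G V) (H : Subgroup G) : Submodule k (G → V) where
  carrier := {f | ∀ (h : H) (g : G), f (↑h * g) = ρ ↑h (f g)}
  add_mem' := by
    intro f g hf hg h x
    simp only [Pi.add_apply, hf h x, hg h x, map_add]
  zero_mem' := by intro h x; simp
  smul_mem' := by
    intro c f hf h x
    simp only [Pi.smul_apply, hf h x, map_smul]

/-- the representation `Ind_H^G (Res_H^G ρ)`, with `G` acting by right translation -/
def indResRep {G : Type*} [Group G] {V : Type*} [AddCommMonoid V] [Module k V]
    (ρ : Representation k G V) (H : Subgroup G) :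
    Representation k G (indResCarrier ρ H) where
  toFun g :=
    { toFun := fun f => ⟨fun x => (f : G → V) (x * g), fun h x => by
        simpa [mul_assoc] using f.2 h (x * g)⟩
      map_add' := fun f₁ f₂ => rfl
      map_smul' := fun c f => rfl }
  map_one' := by
    apply LinearMap.ext; intro f; apply Subtype.ext; funext x; simp
  map_mul' g₁ g₂ := by
    apply LinearMap.ext; intro f; apply Subtype.ext; funext x
    show (f : G → V) (x * (g₁ * g₂)) = (f : G → V) (x * g₁ * g₂)
    rw [mul_assoc]

/-- `ρ` is relatively `H`-projective in the sense that it is a direct summand of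
`Ind_H^G (Res_H^G ρ)` -/
def IsRelativelyProjective {G : Type*} [Group G] {V : Type*} [AddCommMonoid V] [Module k V]
    (ρ : Representation k G V) (H : Subgroup G) : Prop :=
  IsSummand ρ (indResRep ρ H)

/-- `Q` is a vertex of `ρ`: minimal among the subgroups `R` with
`ρ` a direct summand of `Ind_R^G (Res_R^G ρ)` -/
def IsVertex {G : Type*} [Group G] {V : Type*} [AddCommMonoid V] [Module k V]
    (ρ : Representation k G V) (Q : Subgroup G) : Prop :=
  IsRelativelyProjective ρ Q ∧ ∀ R : Subgroup G, R < Q → ¬ IsRelativelyProjective ρ R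

end Defs

/-- a bundled representation of `G` over `k` -/
structure RepOn (k : Type u) (G : Type v) [CommSemiring k] [Monoid G] :
    Type (max (u + 1) v) where
  carrier : Type u
  [isAddCommGroup : AddCommGroup carrier]
  [isModule : Module k carrier]
  ρ : Representation k G carrier

attribute [instance] RepOn.isAddCommGroup RepOn.isModule

section Defs2

variable {k : Type u} [CommSemiring k]

/-- the subgroup `P` acts trivially on the representation `σ` -/
def TrivialOn {Γ : Type*} [Group Γ] {V : Type*} [AddCommMonoid V] [Module k V]
    (σ : Representation k Γ V) (P : Subgroup Γ) : Prop :=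
  ∀ x ∈ P, ∀ v : V, σ x v = v

/-- `A` is a `P`-trivial part of `σ`: `σ ≅ A ⊕ B` where `P` acts trivially on `A` and
no nonzero direct summand of `B` has trivial `P`-action -/
def IsTrivialPartFor {Γ : Type v} [Group Γ] {V : Type*} [AddCommMonoid V] [Module k V]
    (σ : Representation k Γ V) (P : Subgroup Γ) (A : RepOn k Γ) : Prop :=
  TrivialOn A.ρ P ∧
  ∃ B : RepOn k Γ, RepEquiv σ (prodRep A.ρ B.ρ) ∧
    ∀ U : RepOn k Γ, IsSummand U.ρ B.ρ → TrivialOn U.ρ P → ∀ u : U.carrier, u = 0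

/-- `A` is a `P`-trivial part `M_P` of `ρ`: a direct summand of
`Res^G_{N_G(P)} ρ` with trivial `P`-action whose complement has no nonzero direct
summand with trivial `P`-action -/
def IsPTrivialPart {G : Type v} [Group G] {V : Type*} [AddCommMonoid V] [Module k V]
    (ρ : Representation k G V) (P : Subgroup G) (A : RepOn k ↥(Subgroup.normalizer (P : Set G))) : Prop :=
  IsTrivialPartFor (ρ.comp (Subgroup.normalizer (P : Set G)).subtype) (P.subgroupOf (Subgroup.normalizer (P : Set G))) A

end Defs2

/-- the character value at `x` of the `K ⊗ₖ -` base change of the representation `σ` -/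
noncomputable def charAt {k : Type u} [CommRing k] (K : Type v) [CommRing K] [Algebra k K]
    {Γ : Type*} [Monoid Γ] {V : Type*} [AddCommGroup V] [Module k V]
    (σ : Representation k Γ V) (x : Γ) : K :=
  LinearMap.trace K (TensorProduct k K V) (LinearMap.baseChange K (σ x))

/-- the `p`-part of a group element (of finite order) -/
noncomputable def pPart (p : ℕ) {G : Type*} [Group G] (x : G) : G :=
  x ^ ((orderOf x / p ^ (orderOf x).factorization p) *
    (((orderOf x / p ^ (orderOf x).factorization p : ℕ) :
        ZMod (p ^ (orderOf x).factorization p))⁻¹).val)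

/-- the `p'`-part of a natural number -/
def pPrimePart (p n : ℕ) : ℕ := n / p ^ n.factorization p

/-- the conjugate subgroup `g P g⁻¹` -/
def conjSubgroup {G : Type*} [Group G] (g : G) (P : Subgroup G) : Subgroup G :=
  Subgroup.map (MulAut.conj g).toMonoidHom P

/-- `(ρM, ρN)` is an orthogonal unit pair:
`(M ⊗ M°) ⊕ (N ⊗ N°) ≅ k ⊕ (M ⊗ N°) ⊕ (N ⊗ M°)` equivariantly, i.e.
`[M] - [N]` is an orthogonal unit of the trivial source ring -/
def IsOrthogonalUnitPair {k : Type u} [CommRing k] {G : Type v} [Group G]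
    {V : Type*} [AddCommGroup V] [Module k V] {W : Type*} [AddCommGroup W] [Module k W]
    (ρM : Representation k G V) (ρN : Representation k G W) : Prop :=
  RepEquiv (prodRep (ρM.tprod ρM.dual) (ρN.tprod ρN.dual))
    (prodRep (Representation.trivial k (G := G) (V := k)) (prodRep (ρM.tprod ρN.dual) (ρN.tprod ρM.dual)))

/-- the type of `p`-subgroups of `G` -/
def pSubgroup (p : ℕ) (G : Type*) [Group G] : Type _ := {P : Subgroup G // IsPGroup p ↥P}

/-- a coherent `G`-stable tuple of linear characters:
`P ≤ ker φ_P`, `G`-stability, and the coherence condition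
`φ_P(x) = φ_{P⟨x_p⟩}(x)` for `x ∈ N_G(P)` -/
def CoherentPred (p : ℕ) {G : Type*} [Group G] {L : Type*} [CommMonoid L]
    (φ : ∀ P : pSubgroup p G, ↥(Subgroup.normalizer (P.1 : Set G)) →* Lˣ) : Prop :=
  (∀ (P : pSubgroup p G) (x : G) (hx : x ∈ P.1),
      φ P ⟨x, Subgroup.le_normalizer hx⟩ = 1) ∧
  (∀ (P Q : pSubgroup p G) (g x : G) (hx : x ∈ (Subgroup.normalizer (P.1 : Set G))),
      Q.1 = conjSubgroup g P.1 → ∀ (hx' : g * x * g⁻¹ ∈ (Subgroup.normalizer (Q.1 : Set G))),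
      φ Q ⟨g * x * g⁻¹, hx'⟩ = φ P ⟨x, hx⟩) ∧
  (∀ (P Q : pSubgroup p G) (x : G) (hx : x ∈ (Subgroup.normalizer (P.1 : Set G))),
      Q.1 = P.1 ⊔ Subgroup.zpowers (pPart p x) → ∀ (hx' : x ∈ (Subgroup.normalizer (Q.1 : Set G))),
      φ P ⟨x, hx⟩ = φ Q ⟨x, hx'⟩)

/-- the group of coherent `G`-stable tuples of linear characters with values in `L` -/
def coherentTuples (p : ℕ) (G : Type w) [Group G] (L : Type v) [CommMonoid L] :
    Subgroup (∀ P : pSubgroup p G, ↥(Subgroup.normalizer (P.1 : Set G)) →* Lˣ) where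
  carrier := {φ | CoherentPred p φ}
  one_mem' := ⟨fun _ _ _ => rfl, fun _ _ _ _ _ _ _ => rfl, fun _ _ _ _ _ _ => rfl⟩
  mul_mem' := by
    intro a b ha hb
    refine ⟨fun P x hx => ?_, fun P Q g x hx hQ hx' => ?_, fun P Q x hx hQ hx' => ?_⟩
    · show a P _ * b P _ = 1
      rw [ha.1 P x hx, hb.1 P x hx, mul_one]
    · show a Q _ * b Q _ = a P _ * b P _
      rw [ha.2.1 P Q g x hx hQ hx', hb.2.1 P Q g x hx hQ hx']
    · show a P _ * b P _ = a Q _ * b Q _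
      rw [ha.2.2 P Q x hx hQ hx', hb.2.2 P Q x hx hQ hx']
  inv_mem' := by
    intro a ha
    refine ⟨fun P x hx => ?_, fun P Q g x hx hQ hx' => ?_, fun P Q x hx hQ hx' => ?_⟩
    · show (a P _)⁻¹ = 1
      rw [ha.1 P x hx, inv_one]
    · show (a Q _)⁻¹ = (a P _)⁻¹
      rw [ha.2.1 P Q g x hx hQ hx']
    · show (a P _)⁻¹ = (a Q _)⁻¹
      rw [ha.2.2 P Q x hx hQ hx']


section Aux

variable {p : ℕ} [Fact p.Prime]

lemma unit_eq_one_of_pow_p {F : Type*} [Field F] [CharP F p] (t : Fˣ) (k : ℕ)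
    (h : t ^ p ^ k = 1) : t = 1 := by
  have h1 : (t : F) ^ p ^ k = 1 := by
    have := congrArg (Units.val) h
    simpa using this
  have h2 : ((t : F) - 1) ^ p ^ k = 0 := by
    rw [sub_pow_char_pow, h1, one_pow, sub_self]
  have h3 : (t : F) - 1 = 0 :=
    pow_eq_zero_iff (pow_ne_zero k (Fact.out : p.Prime).ne_zero) |>.mp h2
  exact Units.ext (by rw [sub_eq_zero] at h3; simpa using h3)

lemma hom_eq_one_of_p_torsion {F : Type*} [Field F] [CharP F p]
    {H : Type*} [Group H] (f : H →* Fˣ) (h : H) (k : ℕ) (hh : h ^ p ^ k = 1) :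
    f h = 1 :=
  unit_eq_one_of_pow_p (f h) k (by rw [← map_pow, hh, map_one])

lemma pPart_spec {G : Type*} [Group G] (x : G) :
    ∃ e : ℕ, pPart p x = x ^ e ∧
      e ≡ 1 [MOD p ^ ((orderOf x).factorization p)] ∧
      ordCompl[p] (orderOf x) ∣ e := by
  classical
  haveI : NeZero (p ^ ((orderOf x).factorization p)) :=
    ⟨pow_ne_zero _ (Fact.out : p.Prime).ne_zero⟩
  set n := orderOf x with hn
  set k := n.factorization p with hk
  set m := n / p ^ k with hm
  refine ⟨m * (((m : ℕ) : ZMod (p ^ k))⁻¹).val, rfl, ?_, Dvd.intro _ rfl⟩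
  by_cases hn0 : n = 0
  · have hk0 : k = 0 := by rw [hk, hn0]; simp
    rw [hk0]
    simp [Nat.modEq_one]
  · have hcop : m.Coprime (p ^ k) :=
      ((Nat.coprime_ordCompl (Fact.out : p.Prime) hn0).symm).pow_right k
    have : ((m * (((m : ℕ) : ZMod (p ^ k))⁻¹).val : ℕ) : ZMod (p ^ k)) = ((1 : ℕ) : ZMod (p ^ k)) := by
      push_cast
      rw [ZMod.natCast_val, ZMod.cast_id, ZMod.coe_mul_inv_eq_one m hcop]
    exact (ZMod.natCast_eq_natCast_iff _ _ _).mp this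

end Aux

section Aux2

variable {p : ℕ} [Fact p.Prime]

/-- order of the p-part divides the appropriate power of p -/
lemma pPart_pow_eq_one {G : Type*} [Group G] [Finite G] (x : G) :
    (pPart p x) ^ p ^ ((orderOf x).factorization p) = 1 := by
  obtain ⟨e, he, -, hme⟩ := pPart_spec (p := p) x
  rw [he, ← pow_mul, ← orderOf_dvd_iff_pow_eq_one]
  calc orderOf x = p ^ ((orderOf x).factorization p) * ordCompl[p] (orderOf x) :=
        (Nat.ordProj_mul_ordCompl_eq_self _ p).symm
    _ ∣ p ^ ((orderOf x).factorization p) * e := mul_dvd_mul_left _ hme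
    _ = e * p ^ ((orderOf x).factorization p) := mul_comm _ _

/-- the p'-part has order prime to p -/
lemma pPrimePart_not_dvd {G : Type*} [Group G] [Finite G] (x : G) :
    ¬ p ∣ orderOf ((pPart p x)⁻¹ * x) := by
  obtain ⟨e, he, he1, -⟩ := pPart_spec (p := p) x
  have hn0 : orderOf x ≠ 0 := (orderOf_pos x).ne'
  set m := ordCompl[p] (orderOf x) with hm
  have hcomm : Commute ((x ^ e)⁻¹) x := ((Commute.refl x).pow_left e).inv_left
  have hw : (pPart p x)⁻¹ * x = x ^ ((1 : ℤ) - e) := by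
    rw [he, zpow_sub, zpow_one, zpow_natCast]
    exact hcomm.eq
  have hwm : ((pPart p x)⁻¹ * x) ^ m = 1 := by
    rw [hw, ← zpow_natCast, ← zpow_mul, ← orderOf_dvd_iff_zpow_eq_one]
    have hdvd : ((p ^ ((orderOf x).factorization p) : ℕ) : ℤ) ∣ ((e : ℤ) - 1) := by
      exact_mod_cast (Nat.ModEq.dvd he1.symm)
    obtain ⟨c, hc⟩ := hdvd
    have heq : ((orderOf x : ℕ) : ℤ) = ((p ^ ((orderOf x).factorization p) : ℕ) : ℤ) * (m : ℤ) := by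
      exact_mod_cast (Nat.ordProj_mul_ordCompl_eq_self (orderOf x) p).symm
    rw [heq]
    refine ⟨-c, ?_⟩
    have : ((1 : ℤ) - e) = -((e : ℤ) - 1) := by ring
    rw [this, hc]
    ring
  intro hp
  exact Nat.not_dvd_ordCompl (Fact.out : p.Prime) hn0
    (hp.trans (orderOf_dvd_of_pow_eq_one hwm))

/-- p-part of a product of commuting p- and p'- elements -/
lemma pPart_mul {G : Type*} [Group G] [Finite G] {u w : G} (huw : Commute u w)
    {a : ℕ} (hu : u ^ p ^ a = 1) (hw : ¬ p ∣ orderOf w) :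
    pPart p (u * w) = u := by
  have hp : p.Prime := Fact.out
  obtain ⟨b, hb, hq⟩ := (Nat.dvd_prime_pow hp).mp (orderOf_dvd_of_pow_eq_one hu)
  have hw0 : orderOf w ≠ 0 := (orderOf_pos w).ne'
  have hcop : (orderOf u).Coprime (orderOf w) := by
    rw [hq]
    exact (Nat.Prime.coprime_iff_not_dvd hp |>.mpr hw).pow_left b
  have horder : orderOf (u * w) = p ^ b * orderOf w := by
    rw [huw.orderOf_mul_eq_mul_orderOf_of_coprime hcop, hq]
  have hfact : (orderOf (u * w)).factorization p = b := by
    rw [horder, Nat.factorization_mul (pow_ne_zero b hp.ne_zero) hw0]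
    simp [hp.factorization_pow, Nat.factorization_eq_zero_of_not_dvd hw]
  have hcompl : ordCompl[p] (orderOf (u * w)) = orderOf w := by
    rw [hfact, horder, Nat.mul_div_cancel_left _ (pow_pos hp.pos b)]
  obtain ⟨e, he, he1, hme⟩ := pPart_spec (p := p) (u * w)
  rw [he, huw.mul_pow]
  have hwe : w ^ e = 1 := by
    rw [← orderOf_dvd_iff_pow_eq_one, ← hcompl]; exact hme
  have hue : u ^ e = u := by
    have : e ≡ 1 [MOD orderOf u] := by
      rw [hq]
      rw [hfact] at he1
      exact he1
    calc u ^ e = u ^ 1 := pow_eq_pow_iff_modEq.mpr this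
      _ = u := pow_one u
  rw [hwe, hue, mul_one]

end Aux2

section Aux3

variable {p : ℕ} [Fact p.Prime]

/-- in a p-nilpotent group, a p'-element normalizing a p-subgroup centralizes it -/
lemma centralizes_of_prime_order {G : Type*} [Group G] [Finite G]
    (N : Subgroup G) [N.Normal] (hN : Nat.Coprime (Nat.card ↥N) p)
    (hquot : IsPGroup p (G ⧸ N))
    (P : Subgroup G) (hP : IsPGroup p ↥P)
    {w : G} (hw : w ∈ (Subgroup.normalizer (P : Set G))) (hw' : ¬ p ∣ orderOf w) :
    ∀ u ∈ P, w * u = u * w := by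
  have hp : p.Prime := Fact.out
  -- step a : w ∈ N
  have hwN : w ∈ N := by
    rw [← QuotientGroup.eq_one_iff]
    set wq := ((w : G) : G ⧸ N) with hwq
    obtain ⟨k, hk⟩ := hquot wq
    obtain ⟨j, hj, hordq⟩ := (Nat.dvd_prime_pow hp).mp (orderOf_dvd_of_pow_eq_one hk)
    have hdvd : orderOf wq ∣ orderOf w := orderOf_map_dvd (QuotientGroup.mk' N) w
    have hj0 : j = 0 := by
      by_contra hj0
      exact hw' (dvd_trans (dvd_pow_self p hj0) (hordq ▸ hdvd))
    have : orderOf wq = 1 := by rw [hordq, hj0, pow_zero]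
    exact orderOf_eq_one_iff.mp this
  -- step b : P ⊓ N = ⊥
  have htriv : ∀ g ∈ P, g ∈ N → g = 1 := by
    intro g hgP hgN
    obtain ⟨k, hk⟩ := hP ⟨g, hgP⟩
    have hgk : g ^ p ^ k = 1 := by
      have := congrArg (Subgroup.subtype P) hk
      simpa using this
    obtain ⟨j, hj, hordg⟩ := (Nat.dvd_prime_pow hp).mp (orderOf_dvd_of_pow_eq_one hgk)
    have hdvdN : orderOf g ∣ Nat.card ↥N :=
      calc orderOf g = orderOf (N.subtype ⟨g, hgN⟩) := rfl
        _ = orderOf (⟨g, hgN⟩ : ↥N) := orderOf_injective N.subtype N.subtype_injective _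
        _ ∣ Nat.card ↥N := orderOf_dvd_natCard _
    have hj0 : j = 0 := by
      by_contra hj0
      have : p ∣ Nat.card ↥N := dvd_trans (dvd_pow_self p hj0) (hordg ▸ hdvdN)
      have := Nat.Coprime.eq_one_of_dvd hN.symm this
      exact hp.one_lt.ne' this
    have : orderOf g = 1 := by rw [hordg, hj0, pow_zero]
    exact orderOf_eq_one_iff.mp this
  -- step c
  intro u huP
  have hv : w * u * w⁻¹ ∈ P := (Subgroup.mem_normalizer_iff.mp hw u).mp huP
  have hvu : (w * u * w⁻¹) * u⁻¹ ∈ P := mul_mem hv (inv_mem huP)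
  have hvuN : (w * u * w⁻¹) * u⁻¹ ∈ N := by
    have h1 : u * w⁻¹ * u⁻¹ ∈ N := by
      have : w⁻¹ ∈ N := inv_mem hwN
      exact (Subgroup.Normal.conj_mem ‹N.Normal› _ this u)
    have : w * (u * w⁻¹ * u⁻¹) ∈ N := mul_mem hwN h1
    convert this using 1
    group
  have := htriv _ hvu hvuN
  have hveq : w * u * w⁻¹ = u := by
    have h2 : (w * u * w⁻¹) * u⁻¹ * u = 1 * u := by rw [this]
    simpa [mul_assoc] using h2
  calc w * u = (w * u * w⁻¹) * w := by group
    _ = u * w := by rw [hveq]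

/-- existence of a cocyclic step inside a nontrivial finite p-group -/
lemma exists_step {G : Type*} [Group G] [Finite G]
    (P : Subgroup G) (hP : IsPGroup p ↥P) (hbot : P ≠ ⊥) :
    ∃ (R : Subgroup G) (u : G), R < P ∧ u ∈ P ∧ u ∈ (Subgroup.normalizer (R : Set G)) ∧
      R ⊔ Subgroup.zpowers u = P := by
  haveI : Finite (Subgroup ↥P) :=
    Finite.of_injective (fun H => (H : Set ↥P)) SetLike.coe_injective
  haveI : Group.IsNilpotent ↥P := hP.isNilpotent
  have hnc : NormalizerCondition ↥P := normalizerCondition_of_isNilpotent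
  rcases eq_top_or_exists_le_coatom (⊥ : Subgroup ↥P) with htop | ⟨H, hH, -⟩
  · exfalso
    apply hbot
    ext g
    simp only [Subgroup.mem_bot]
    constructor
    · intro hg
      have : (⟨g, hg⟩ : ↥P) ∈ (⊤ : Subgroup ↥P) := trivial
      rw [← htop, Subgroup.mem_bot] at this
      exact congrArg (Subgroup.subtype P) this
    · rintro rfl; exact one_mem P
  · have hHlt : H < ⊤ := lt_top_iff_ne_top.mpr hH.1
    obtain ⟨u', hu'N, hu'H⟩ := SetLike.exists_of_lt (hnc H hHlt)
    have hsup' : H ⊔ Subgroup.zpowers u' = ⊤ := by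
      refine hH.2 _ (lt_of_le_of_ne le_sup_left ?_)
      intro hEq
      exact hu'H (hEq ▸ (le_sup_right : Subgroup.zpowers u' ≤ H ⊔ Subgroup.zpowers u') (Subgroup.mem_zpowers u'))
    refine ⟨H.map P.subtype, ↑u', ?_, u'.2, ?_, ?_⟩
    · constructor
      · exact Subgroup.map_subtype_le H
      · intro hle
        have : (↑u' : G) ∈ H.map P.subtype := hle u'.2
        obtain ⟨h', hh', hh'e⟩ := this
        have : h' = u' := Subtype.ext hh'e
        exact hu'H (this ▸ hh')
    · rw [Subgroup.mem_normalizer_iff]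
      intro h
      constructor
      · rintro ⟨h', hh', rfl⟩
        exact ⟨u' * h' * u'⁻¹, (Subgroup.mem_normalizer_iff.mp hu'N h').mp hh', rfl⟩
      · rintro ⟨k', hk', hk'e⟩
        refine ⟨u'⁻¹ * k' * u', ?_, ?_⟩
        · have := (Subgroup.mem_normalizer_iff.mp (inv_mem hu'N) k').mp hk'
          simpa using this
        · show ((u'⁻¹ * k' * u' : ↥P) : G) = h
          push_cast
          have hk'' : (↑k' : G) = ↑u' * h * (↑u')⁻¹ := hk'e
          rw [hk'']
          group
    · have : Subgroup.map P.subtype H ⊔ Subgroup.zpowers (↑u' : G) =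
          Subgroup.map P.subtype (H ⊔ Subgroup.zpowers u') := by
        rw [Subgroup.map_sup, MonoidHom.map_zpowers]
        rfl
      rw [this, hsup']
      rw [← MonoidHom.range_eq_map]
      exact Subgroup.subtype_range P

end Aux3

section Aux4

variable {p : ℕ} [Fact p.Prime]

lemma mem_normalizer_bot {G : Type*} [Group G] (x : G) :
    x ∈ (Subgroup.normalizer ((⊥ : Subgroup G) : Set G)) := by
  have h : (Subgroup.normalizer ((⊥ : Subgroup G) : Set G)) = ⊤ := Subgroup.normalizer_eq_top_iff.mpr inferInstance
  rw [h]; trivial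

lemma card_lt_of_lt {G : Type*} [Group G] [Finite G] {R P : Subgroup G} (h : R < P) :
    Nat.card ↥R < Nat.card ↥P := by
  have h1 : (R : Set G) ⊂ (P : Set G) := SetLike.coe_ssubset_coe.mpr h
  have := Set.ncard_lt_ncard h1 (Set.toFinite _)
  rw [← Nat.card_coe_set_eq, ← Nat.card_coe_set_eq] at this
  exact this

lemma key_lemma {G : Type*} [Group G] [Finite G]
    {F : Type*} [Field F] [CharP F p]
    (N : Subgroup G) [N.Normal] (hN : Nat.Coprime (Nat.card ↥N) p)
    (hquot : IsPGroup p (G ⧸ N))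
    (Φ : ∀ P : pSubgroup p G, ↥((Subgroup.normalizer (P.1 : Set G))) →* Fˣ) (hΦ : CoherentPred p Φ) :
    ∀ (P : pSubgroup p G) (x : G) (hx : x ∈ (Subgroup.normalizer (P.1 : Set G)))
      (hx' : x ∈ (Subgroup.normalizer ((⊥ : Subgroup G) : Set G))),
      Φ P ⟨x, hx⟩ = Φ ⟨⊥, IsPGroup.of_bot⟩ ⟨x, hx'⟩ := by
  suffices H : ∀ n (P : pSubgroup p G), Nat.card ↥P.1 = n →
      ∀ (x : G) (hx : x ∈ (Subgroup.normalizer (P.1 : Set G))) (hx' : x ∈ (Subgroup.normalizer ((⊥ : Subgroup G) : Set G))),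
      Φ P ⟨x, hx⟩ = Φ ⟨⊥, IsPGroup.of_bot⟩ ⟨x, hx'⟩ by
    exact fun P => H _ P rfl
  intro n
  induction n using Nat.strong_induction_on with
  | _ n IH =>
  rintro ⟨P1, hP1⟩ hn x hx hx'
  by_cases hPbot : P1 = ⊥
  · subst hPbot
    rfl
  · -- decompose x into p-part and p'-part
    obtain ⟨e, he, he1, hem⟩ := pPart_spec (p := p) x
    set y := x ^ e with hy
    set w := y⁻¹ * x with hwdef
    have hy_memP : y ∈ (Subgroup.normalizer (P1 : Set G)) := pow_mem hx e
    have hw_memP : w ∈ (Subgroup.normalizer (P1 : Set G)) := mul_mem (inv_mem hy_memP) hx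
    have hy_pow : y ^ p ^ ((orderOf x).factorization p) = 1 := he ▸ pPart_pow_eq_one x
    have hwp : ¬ p ∣ orderOf w := by
      have h0 := pPrimePart_not_dvd (p := p) x
      rw [he] at h0
      exact h0
    -- reduce to the p'-part w
    have hx_split : (⟨x, hx⟩ : ↥(Subgroup.normalizer (P1 : Set G))) = ⟨y, hy_memP⟩ * ⟨w, hw_memP⟩ :=
      Subtype.ext (by simp [hwdef])
    have hx_split' : (⟨x, hx'⟩ : ↥(Subgroup.normalizer ((⊥ : Subgroup G) : Set G))) =
        ⟨y, mem_normalizer_bot y⟩ * ⟨w, mem_normalizer_bot w⟩ :=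
      Subtype.ext (by simp [hwdef])
    have hyP1 : Φ ⟨P1, hP1⟩ ⟨y, hy_memP⟩ = 1 :=
      hom_eq_one_of_p_torsion _ _ ((orderOf x).factorization p)
        (Subtype.ext (by push_cast; exact hy_pow))
    have hybot1 : Φ ⟨⊥, IsPGroup.of_bot⟩ ⟨y, mem_normalizer_bot y⟩ = 1 :=
      hom_eq_one_of_p_torsion _ _ ((orderOf x).factorization p)
        (Subtype.ext (by push_cast; exact hy_pow))
    rw [hx_split, hx_split', map_mul, map_mul, hyP1, hybot1, one_mul, one_mul]
    -- now the main step
    have hcent : ∀ u ∈ P1, w * u = u * w :=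
      centralizes_of_prime_order N hN hquot P1 hP1 hw_memP hwp
    obtain ⟨R, u, hRP, huP, huN, hsup⟩ := exists_step P1 hP1 hPbot
    obtain ⟨a, ha⟩ := hP1 ⟨u, huP⟩
    have hua : u ^ p ^ a = 1 := by
      have := congrArg (Subgroup.subtype P1) ha
      simpa using this
    have hcomm : Commute u w := (hcent u huP).symm
    have hz : pPart p (u * w) = u := pPart_mul hcomm hua hwp
    have hfix : ∀ h ∈ P1, w * h * w⁻¹ = h := by
      intro h hh
      rw [hcent h hh]
      group
    have hw_memR : w ∈ (Subgroup.normalizer (R : Set G)) := by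
      rw [Subgroup.mem_normalizer_iff]
      intro h
      constructor
      · intro hh
        rw [hfix h (hRP.le hh)]
        exact hh
      · intro hh
        have hhP : h ∈ P1 := by
          have := (Subgroup.mem_normalizer_iff.mp hw_memP h)
          exact this.mpr (hRP.le hh)
        rwa [hfix h hhP] at hh
    have hz_memR : u * w ∈ (Subgroup.normalizer (R : Set G)) := mul_mem huN hw_memR
    have hz_memP : u * w ∈ (Subgroup.normalizer (P1 : Set G)) := mul_mem (Subgroup.le_normalizer huP) hw_memP
    have hRp : IsPGroup p ↥R := hP1.to_le hRP.le
    have hcoh := hΦ.2.2 ⟨R, hRp⟩ ⟨P1, hP1⟩ (u * w) hz_memR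
      (by rw [hz]; exact hsup.symm) hz_memP
    have hsplitP : (⟨u * w, hz_memP⟩ : ↥(Subgroup.normalizer (P1 : Set G))) =
        ⟨u, Subgroup.le_normalizer huP⟩ * ⟨w, hw_memP⟩ := Subtype.ext rfl
    have hsplitR : (⟨u * w, hz_memR⟩ : ↥(Subgroup.normalizer (R : Set G))) =
        ⟨u, huN⟩ * ⟨w, hw_memR⟩ := Subtype.ext rfl
    have huPone : Φ ⟨P1, hP1⟩ ⟨u, Subgroup.le_normalizer huP⟩ = 1 :=
      hom_eq_one_of_p_torsion _ _ a (Subtype.ext (by push_cast; exact hua))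
    have huRone : Φ ⟨R, hRp⟩ ⟨u, huN⟩ = 1 :=
      hom_eq_one_of_p_torsion _ _ a (Subtype.ext (by push_cast; exact hua))
    have hstep : Φ ⟨P1, hP1⟩ ⟨w, hw_memP⟩ = Φ ⟨R, hRp⟩ ⟨w, hw_memR⟩ := by
      have h1 := hcoh
      rw [hsplitP, hsplitR, map_mul, map_mul, huPone, huRone, one_mul, one_mul] at h1
      exact h1.symm
    rw [hstep]
    exact IH (Nat.card ↥R) (hn ▸ card_lt_of_lt hRP) ⟨R, hRp⟩ rfl w hw_memR
      (mem_normalizer_bot w)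

end Aux4

theorem statement15 (p : ℕ) [Fact p.Prime]
    (G : Type w) [Group G] [Finite G]
    (F : Type v) [Field F] [CharP F p]
    (N : Subgroup G) [N.Normal] (hN : Nat.Coprime (Nat.card ↥N) p)
    (hquot : IsPGroup p (G ⧸ N)) :
    ∃ e : (G →* Fˣ) ≃* ↥(coherentTuples p G F),
      ∀ (φ : G →* Fˣ) (P : pSubgroup p G) (x : ↥((Subgroup.normalizer (P.1 : Set G)))),
        (e φ).1 P x = φ (x : G) := by
  classical
  have hmem : ∀ φ : G →* Fˣ,
      (fun P : pSubgroup p G => φ.comp (Subgroup.normalizer (P.1 : Set G)).subtype) ∈ coherentTuples p G F := by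
    intro φ
    refine ⟨fun P x hx => ?_, fun P Q g x hx hQ hx' => ?_, fun P Q x hx hQ hx' => ?_⟩
    · obtain ⟨k, hk⟩ := P.2 ⟨x, hx⟩
      have hxk : x ^ p ^ k = 1 := by
        have := congrArg (Subgroup.subtype P.1) hk
        simpa using this
      exact hom_eq_one_of_p_torsion φ x k hxk
    · show φ (g * x * g⁻¹) = φ x
      rw [map_mul, map_mul, map_inv]
      rw [mul_comm (φ g) (φ x), mul_assoc, mul_inv_cancel, mul_one]
    · rfl
  let ι : G →* ↥((Subgroup.normalizer ((⊥ : Subgroup G) : Set G))) :=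
    { toFun := fun x => ⟨x, mem_normalizer_bot x⟩
      map_one' := rfl
      map_mul' := fun _ _ => rfl }
  refine ⟨{ toFun := fun φ => ⟨fun P => φ.comp (Subgroup.normalizer (P.1 : Set G)).subtype, hmem φ⟩,
            invFun := fun Φ => (Φ.1 ⟨⊥, IsPGroup.of_bot⟩).comp ι,
            left_inv := fun φ => MonoidHom.ext fun x => rfl,
            right_inv := ?_,
            map_mul' := fun φ ψ => rfl }, fun φ P x => rfl⟩
  intro Φ
  apply Subtype.ext
  funext P
  apply MonoidHom.ext
  rintro ⟨x, hx⟩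
  exact (key_lemma N hN hquot Φ.1 Φ.2 P x hx (mem_normalizer_bot x)).symm
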